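/- Let k > s ≥ 3 be integers and let n be sufficiently large in terms of k. Let N be the least positive integer such that r_k(N) = ⌊n/s⌋. Then f_{s,k}(n) ≥ (n/(300·s·N))^{s−2} · n². -/

import Mathlib

open Finset Pointwise

/-- The `k`-term arithmetic progression `{x, x+d, …, x+(k-1)d}` as a finite set. -/
def AP (k : ℕ) (x d : ℤ) : Finset ℤ := (Finset.range k).image (fun i : ℕ => x + (i : ℤ) * d)

/-- A set of integers is `k`-AP free if it contains no nontrivial `k`-term
arithmetic progression. -/
def APFree (k : ℕ) (A : Set ℤ) : Prop :=
  ∀ x d : ℤ, d ≠ 0 → ¬ (↑(AP k x d) : Set ℤ) ⊆ A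

/-- `fAP s A` is the number of nontrivial `s`-term arithmetic progressions contained
in the finite set `A`. -/
noncomputable def fAP (s : ℕ) (A : Finset ℤ) : ℕ :=
  Nat.card {P : Finset ℤ // P ⊆ A ∧ ∃ x d : ℤ, d ≠ 0 ∧ P = AP s x d}

/-- `fsk s k n` is the maximum number of nontrivial `s`-term arithmetic progressions
in a `k`-AP free set of `n` integers. -/
noncomputable def fsk (s k n : ℕ) : ℕ :=
  sSup {m | ∃ A : Finset ℤ, A.card = n ∧ APFree k ↑A ∧ fAP s A = m}

/-- `rk k n` is the size of the largest `k`-AP free subset of `{1, …, n}`. -/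
noncomputable def rk (k n : ℕ) : ℕ :=
  sSup {m | ∃ A : Finset ℤ, A ⊆ Finset.Icc 1 (n : ℤ) ∧ APFree k ↑A ∧ A.card = m}

/-- The partial sumset `A +_G B` along the edge set `E` of a bipartite graph. -/
def partialSumset (E : Finset (ℤ × ℤ)) : Finset ℤ := E.image (fun e => e.1 + e.2)

/-- `pathCount A B E a a'` is the number of (ordered) paths `(a, b, a'', b', a')` of
length four between `a` and `a'` in the bipartite graph with parts `A`, `B` and
edge set `E`. -/
def pathCount (A B : Finset ℤ) (E : Finset (ℤ × ℤ)) (a a' : ℤ) : ℕ :=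
  ((B ×ˢ A ×ˢ B).filter (fun t =>
    (a, t.1) ∈ E ∧ (t.2.1, t.1) ∈ E ∧ (t.2.1, t.2.2) ∈ E ∧ (a', t.2.2) ∈ E)).card




lemma mem_AP {k : ℕ} {x d y : ℤ} : y ∈ AP k x d ↔ ∃ i : ℕ, i < k ∧ y = x + (i:ℤ) * d := by
  simp [AP, Finset.mem_image, Finset.mem_range, eq_comm]

lemma AP_neg (k : ℕ) (x d : ℤ) (hk : 0 < k) : AP k (x + ((k:ℤ)-1)*d) (-d) = AP k x d := by
  ext y
  simp only [mem_AP]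
  constructor
  · rintro ⟨i, hi, rfl⟩
    refine ⟨k - 1 - i, by omega, ?_⟩
    have h1 : ((k - 1 - i : ℕ) : ℤ) = (k:ℤ) - 1 - i := by
      push_cast [Nat.cast_sub (by omega : i ≤ k - 1)]; omega
    rw [h1]; ring
  · rintro ⟨i, hi, rfl⟩
    refine ⟨k - 1 - i, by omega, ?_⟩
    have h1 : ((k - 1 - i : ℕ) : ℤ) = (k:ℤ) - 1 - i := by
      push_cast [Nat.cast_sub (by omega : i ≤ k - 1)]; omega
    rw [h1]; ring


lemma APFree_subset {k : ℕ} {S T : Set ℤ} (hST : S ⊆ T) (hT : APFree k T) : APFree k S :=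
  fun x d hd hsub => hT x d hd (hsub.trans hST)

lemma APFree_translate {k : ℕ} {B : Finset ℤ} (h : APFree k ↑B) (t : ℤ) :
    APFree k ↑(B.image (fun b => b + t)) := by
  intro x d hd hsub
  refine h (x - t) d hd ?_
  intro y hy
  simp only [Finset.coe_image, Set.mem_image, Finset.mem_coe] at hsub ⊢
  rw [Finset.mem_coe, mem_AP] at hy
  obtain ⟨i, hi, rfl⟩ := hy
  have : x + i * d ∈ (↑(AP k x d) : Set ℤ) := by
    simp only [Finset.mem_coe, mem_AP]; exact ⟨i, hi, rfl⟩
  obtain ⟨b, hb, hbe⟩ := hsub this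
  simp only [] at hbe
  have heq : x - t + ↑i * d = b := by linarith
  rwa [heq]

lemma AP_min {s : ℕ} {x d : ℤ} (hd : 0 < d) {y : ℤ} (hy : y ∈ AP s x d) : x ≤ y := by
  rw [mem_AP] at hy
  obtain ⟨i, hi, rfl⟩ := hy
  nlinarith [Int.ofNat_nonneg i]

lemma AP_inj {s : ℕ} (hs : 2 ≤ s) {x d x' d' : ℤ} (hd : 0 < d) (hd' : 0 < d')
    (h : AP s x d = AP s x' d') : x = x' ∧ d = d' := by
  have hx : x ∈ AP s x d := mem_AP.2 ⟨0, by omega, by simp⟩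
  have hx' : x' ∈ AP s x' d' := mem_AP.2 ⟨0, by omega, by simp⟩
  have h1 : x ≤ x' := AP_min hd (h ▸ hx')
  have h2 : x' ≤ x := AP_min hd' (h ▸ hx)
  have hxx : x = x' := le_antisymm h1 h2
  refine ⟨hxx, ?_⟩
  -- max elements
  have hm : x + ((s:ℤ)-1)*d ∈ AP s x' d' := h ▸ (mem_AP.2 ⟨s-1, by omega, by
    push_cast [Nat.cast_sub (by omega : 1 ≤ s)]; ring⟩)
  have hm' : x' + ((s:ℤ)-1)*d' ∈ AP s x d := h.symm ▸ (mem_AP.2 ⟨s-1, by omega, by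
    push_cast [Nat.cast_sub (by omega : 1 ≤ s)]; ring⟩)
  rw [mem_AP] at hm hm'
  obtain ⟨i, hi, hie⟩ := hm
  obtain ⟨i', hi', hie'⟩ := hm'
  have his : (i:ℤ) < (s:ℤ) := by exact_mod_cast hi
  have his' : (i':ℤ) < (s:ℤ) := by exact_mod_cast hi'
  have hs1 : (2:ℤ) ≤ (s:ℤ) := by exact_mod_cast hs
  nlinarith

lemma num74 : ∀ s : ℕ, 3 ≤ s → 5625 * s^3 ≤ 74^s := by
  intro s hs
  induction s with
  | zero => omega
  | succ t ih =>
    rcases Nat.lt_or_ge t 3 with ht | ht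
    · interval_cases t <;> simp_all <;> norm_num
    · have h1 := ih ht
      have h2 : (t+1)^3 ≤ 8 * t^3 := by nlinarith [sq_nonneg t, ht]
      calc 5625 * (t+1)^3 ≤ 8 * (5625 * t^3) := by nlinarith
        _ ≤ 8 * 74^t := by omega
        _ ≤ 74^(t+1) := by rw [pow_succ]; omega

lemma pow2k : ∀ k : ℕ, 4 ≤ k → 2*k + 1 < 2^k := by
  intro k hk
  induction k with
  | zero => omega
  | succ t ih =>
    rcases Nat.lt_or_ge t 4 with ht | ht
    · interval_cases t <;> simp_all <;> norm_num
    · have := ih ht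
      have h2 : 2^t ≥ 2 := by
        calc 2 = 2^1 := (pow_one 2).symm
        _ ≤ 2^t := Nat.pow_le_pow_right (by omega) (by omega)
      rw [pow_succ]; omega




lemma APFree_empty {k : ℕ} (hk : 0 < k) : APFree k (∅ : Set ℤ) := by
  intro x d hd hsub
  have : x ∈ (↑(AP k x d) : Set ℤ) := by
    simp only [Finset.mem_coe, mem_AP]; exact ⟨0, hk, by simp⟩
  exact (hsub this).elim

lemma fAP_eq_ncard (s : ℕ) (A : Finset ℤ) :
    fAP s A = Set.ncard {P : Finset ℤ | P ⊆ A ∧ ∃ x d : ℤ, d ≠ 0 ∧ P = AP s x d} := by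
  rw [fAP, ← Nat.card_coe_set_eq]
  rfl

lemma fAP_set_finite (s : ℕ) (A : Finset ℤ) :
    {P : Finset ℤ | P ⊆ A ∧ ∃ x d : ℤ, d ≠ 0 ∧ P = AP s x d}.Finite := by
  apply Set.Finite.subset (A.powerset.finite_toSet)
  intro P hP
  simp only [Finset.coe_powerset, Set.mem_preimage, Set.mem_powerset_iff, Finset.coe_subset]
  exact hP.1

lemma fAP_le (s : ℕ) (A : Finset ℤ) : fAP s A ≤ 2 ^ A.card := by
  rw [fAP_eq_ncard]
  calc Set.ncard {P : Finset ℤ | P ⊆ A ∧ ∃ x d : ℤ, d ≠ 0 ∧ P = AP s x d}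
      ≤ Set.ncard (↑A.powerset : Set (Finset ℤ)) := by
        apply Set.ncard_le_ncard _ (A.powerset.finite_toSet)
        intro P hP
        simp only [Finset.coe_powerset, Set.mem_preimage, Set.mem_powerset_iff,
          Finset.coe_subset] at *
        exact hP.1
    _ = 2 ^ A.card := by rw [Set.ncard_coe_finset, Finset.card_powerset]

lemma le_fsk {s k n : ℕ} (A : Finset ℤ) (hcard : A.card = n) (hfree : APFree k ↑A) :
    fAP s A ≤ fsk s k n := by
  apply le_csSup
  · refine ⟨2^n, ?_⟩
    rintro m ⟨A', hA', hfree', rfl⟩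
    calc fAP s A' ≤ 2 ^ A'.card := fAP_le s A'
      _ = 2^n := by rw [hA']
  · exact ⟨A, hcard, hfree, rfl⟩

lemma rk_attained {k : ℕ} (hk : 0 < k) (N : ℕ) :
    ∃ B : Finset ℤ, B ⊆ Finset.Icc 1 (N:ℤ) ∧ APFree k ↑B ∧ B.card = rk k N := by
  have hmem : rk k N ∈ {m | ∃ A : Finset ℤ, A ⊆ Finset.Icc 1 (N : ℤ) ∧ APFree k ↑A ∧ A.card = m} := by
    apply Nat.sSup_mem
    · exact ⟨0, ∅, by simp, by simpa using APFree_empty hk, rfl⟩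
    · refine ⟨N, ?_⟩
      rintro m ⟨A, hA, _, rfl⟩
      calc A.card ≤ (Finset.Icc 1 (N:ℤ)).card := Finset.card_le_card hA
        _ = N := by rw [Int.card_Icc]; simp
  obtain ⟨B, h1, h2, h3⟩ := hmem
  exact ⟨B, h1, h2, h3⟩

set_option maxHeartbeats 1000000 in
lemma exist_good (s N : ℕ) (hs : 3 ≤ s) (hN : 1 ≤ N) (B : Finset ℤ)
    (hB : B ⊆ Finset.Icc 1 (N:ℤ)) :
    ∃ (c : ℕ → ℤ) (GP : Finset (ℤ × ℤ)),
      (∀ j, c j ∈ Finset.Icc (2 - 2*(N:ℤ)) (2*(N:ℤ) - 2)) ∧ c 0 = 0 ∧ c 1 = 0 ∧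
      GP ⊆ B ×ˢ B ∧
      (∀ p ∈ GP, ∀ j : ℕ, 2 ≤ j → j ≤ s - 1 → p.1 + (j:ℤ) * (p.2 - p.1) - c j ∈ B) ∧
      B.card ^ s ≤ s * (4*N)^(s-2) * GP.card := by
  classical
  set m := B.card with hm
  set C : Finset ℤ := Finset.Icc (2 - 2*(N:ℤ)) (2*(N:ℤ) - 2) with hC
  set ι : ℤ → ℕ := fun b => (b - 1).toNat * s / N with hι
  set P : Finset (ℤ × ℤ) := (B ×ˢ B).filter (fun p => ι p.1 = ι p.2) with hP
  -- elements of B are in [1, N]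
  have hBmem : ∀ b ∈ B, 1 ≤ b ∧ b ≤ (N:ℤ) := by
    intro b hb
    have := hB hb
    rw [Finset.mem_Icc] at this
    exact this
  -- same fiber means close
  have hclose : ∀ p ∈ P, (s:ℤ) * |p.2 - p.1| ≤ (N:ℤ) - 1 := by
    rintro ⟨b, b'⟩ hp
    rw [hP, Finset.mem_filter, Finset.mem_product] at hp
    obtain ⟨⟨hb, hb'⟩, heq⟩ := hp
    obtain ⟨hb1, hb2⟩ := hBmem b hb
    obtain ⟨hb1', hb2'⟩ := hBmem b' hb'
    simp only [hι] at heq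
    set a := (b - 1).toNat with ha
    set a' := (b' - 1).toNat with ha'
    have hab : (a : ℤ) = b - 1 := by simp [ha]; omega
    have hab' : (a' : ℤ) = b' - 1 := by simp [ha']; omega
    have h1 := Nat.div_add_mod (a * s) N
    have h2 := Nat.div_add_mod (a' * s) N
    have h3 : a * s % N < N := Nat.mod_lt _ (by omega)
    have h4 : a' * s % N < N := Nat.mod_lt _ (by omega)
    rw [heq] at h1
    -- |a*s - a'*s| ≤ N - 1 in ℕ
    have h5 : a * s ≤ a' * s + (N - 1) ∧ a' * s ≤ a * s + (N - 1) := by omega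
    have h6 : (a:ℤ) * s ≤ (a':ℤ) * s + ((N:ℤ) - 1) ∧ (a':ℤ) * s ≤ (a:ℤ) * s + ((N:ℤ) - 1) := by
      constructor <;> exact_mod_cast by
        push_cast [Nat.cast_sub (by omega : 1 ≤ N)] at *
        omega
    show (s:ℤ) * |b' - b| ≤ (N:ℤ) - 1
    rcases abs_cases (b' - b) with ⟨he, _⟩ | ⟨he, _⟩ <;> rw [he] <;> nlinarith [h6.1, h6.2]
  -- value range
  have hv : ∀ p ∈ P, ∀ j : ℕ, j ≤ s → 2 - (N:ℤ) ≤ p.1 + (j:ℤ) * (p.2 - p.1) ∧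
      p.1 + (j:ℤ) * (p.2 - p.1) ≤ 2*(N:ℤ) - 1 := by
    rintro p hp j hj
    have hcl := hclose p hp
    have hjs : (j:ℤ) ≤ (s:ℤ) := by exact_mod_cast hj
    have hj0 : (0:ℤ) ≤ (j:ℤ) := Int.ofNat_nonneg j
    have hPB : p ∈ B ×ˢ B := Finset.mem_of_mem_filter p (by rw [hP] at hp; exact hp)
    rw [Finset.mem_product] at hPB
    obtain ⟨h11, h12⟩ := hBmem _ hPB.1
    have habs : (j:ℤ) * |p.2 - p.1| ≤ (N:ℤ) - 1 := by
      have hs0 : (0:ℤ) < (s:ℤ) := by exact_mod_cast (by omega : 0 < s)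
      nlinarith [abs_nonneg (p.2 - p.1)]
    rcases abs_cases (p.2 - p.1) with ⟨he, _⟩ | ⟨he, _⟩ <;> rw [he] at habs <;>
      constructor <;> nlinarith
  -- fiber count: for p ∈ P and 2 ≤ j ≤ s-1, #{c ∈ C | v - c ∈ B} = m
  have hfiber : ∀ p ∈ P, ∀ j : ℕ, j ≤ s →
      (C.filter (fun ch => p.1 + (j:ℤ) * (p.2 - p.1) - ch ∈ B)).card = m := by
    rintro p hp j hj
    set v := p.1 + (j:ℤ) * (p.2 - p.1) with hvdef
    have hvr := hv p hp j hj
    have himg : C.filter (fun ch => v - ch ∈ B) = B.image (fun β => v - β) := by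
      ext ch
      simp only [Finset.mem_filter, Finset.mem_image]
      constructor
      · rintro ⟨hc, hcb⟩
        exact ⟨v - ch, hcb, by ring⟩
      · rintro ⟨β, hβ, rfl⟩
        refine ⟨?_, by simpa using hβ⟩
        obtain ⟨hβ1, hβ2⟩ := hBmem β hβ
        rw [hC, Finset.mem_Icc]
        omega
    rw [himg, Finset.card_image_of_injOn]
    intro x _ y _ hxy
    simp only [] at hxy
    omega
  -- P is large
  have hPcard : m^2 ≤ s * P.card := by
    have hιlt : ∀ b ∈ B, ι b ∈ Finset.range s := by
      intro b hb
      obtain ⟨hb1, hb2⟩ := hBmem b hb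
      rw [Finset.mem_range, hι]
      simp only []
      have h1 : (b-1).toNat ≤ N - 1 := by omega
      calc (b-1).toNat * s / N ≤ (N-1) * s / N := by
            apply Nat.div_le_div_right; exact Nat.mul_le_mul_right s h1
        _ < s := by
            apply Nat.div_lt_of_lt_mul
            have : 1 ≤ s := by omega
            exact Nat.mul_lt_mul_of_lt_of_le (by omega) (le_refl s) (by omega)
    have hcard1 : m = ∑ i ∈ Finset.range s, (B.filter (fun b => ι b = i)).card :=
      Finset.card_eq_sum_card_fiberwise hιlt
    have hcard2 : P.card = ∑ i ∈ Finset.range s, ((B.filter (fun b => ι b = i)) ×ˢ (B.filter (fun b => ι b = i))).card := by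
      rw [hP]
      have h1 : ∀ p ∈ (B ×ˢ B).filter (fun p => ι p.1 = ι p.2), ι p.1 ∈ Finset.range s := by
        rintro p hp
        rw [Finset.mem_filter, Finset.mem_product] at hp
        exact hιlt _ hp.1.1
      rw [Finset.card_eq_sum_card_fiberwise h1]
      apply Finset.sum_congr rfl
      intro i _
      congr 1
      ext p
      simp only [Finset.mem_filter, Finset.mem_product]
      constructor
      · rintro ⟨⟨⟨h1', h2'⟩, h3'⟩, h4'⟩
        exact ⟨⟨h1', h4'⟩, h2', by omega⟩
      · rintro ⟨⟨h1', h2'⟩, h3', h4'⟩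
        exact ⟨⟨⟨h1', h3'⟩, by omega⟩, h2'⟩
    -- Chebyshev/Cauchy-Schwarz in ℤ
    have hcs : ((m:ℤ))^2 ≤ (s:ℤ) * ∑ i ∈ Finset.range s, ((B.filter (fun b => ι b = i)).card : ℤ)^2 := by
      have := sq_sum_le_card_mul_sum_sq (s := Finset.range s)
        (f := fun i => ((B.filter (fun b => ι b = i)).card : ℤ))
      rw [Finset.card_range] at this
      calc ((m:ℤ))^2 = (∑ i ∈ Finset.range s, ((B.filter (fun b => ι b = i)).card : ℤ))^2 := by
            rw_mod_cast [hcard1]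
        _ ≤ (s:ℤ) * ∑ i ∈ Finset.range s, ((B.filter (fun b => ι b = i)).card : ℤ)^2 := this
    have : (m:ℤ)^2 ≤ (s:ℤ) * (P.card : ℤ) := by
      rw [hcard2]
      push_cast
      convert hcs using 2
      apply Finset.sum_congr rfl
      intro i _
      rw [Finset.card_product]
      push_cast
      ring
    exact_mod_cast this
  -- the pi-averaging, indexed by Fin (s-2); actual j is (i:ℕ)+2
  have hCcard : C.card = 4*N - 3 := by
    rw [hC, Int.card_Icc]
    have : (2*(N:ℤ) - 2 + 1 - (2 - 2*(N:ℤ))) = 4*(N:ℤ) - 3 := by ring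
    rw [this]
    omega
  set good : (Fin (s-2) → ℤ) → Finset (ℤ × ℤ) := fun c =>
    P.filter (fun p => ∀ j : Fin (s-2), p.1 + (((j:ℕ)+2 : ℕ):ℤ) * (p.2 - p.1) - c j ∈ B)
    with hgood
  have hsum : ∑ c ∈ Fintype.piFinset (fun _ : Fin (s-2) => C), (good c).card
      = P.card * m^(s-2) := by
    have h1 : ∀ c : Fin (s-2) → ℤ, (good c).card = ∑ p ∈ P, ∏ j : Fin (s-2),
        (if p.1 + (((j:ℕ)+2 : ℕ):ℤ) * (p.2 - p.1) - c j ∈ B then (1:ℕ) else 0) := by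
      intro c
      rw [hgood]
      simp only []
      rw [Finset.card_filter]
      apply Finset.sum_congr rfl
      intro p _
      by_cases hall : ∀ j : Fin (s-2), p.1 + (((j:ℕ)+2 : ℕ):ℤ) * (p.2 - p.1) - c j ∈ B
      · rw [if_pos hall, Finset.prod_eq_one]
        intro j _
        rw [if_pos (hall j)]
      · rw [if_neg hall]
        push_neg at hall
        obtain ⟨j, hj⟩ := hall
        exact (Finset.prod_eq_zero (Finset.mem_univ j) (by rw [if_neg hj])).symm
    calc ∑ c ∈ Fintype.piFinset (fun _ : Fin (s-2) => C), (good c).card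
        = ∑ c ∈ Fintype.piFinset (fun _ : Fin (s-2) => C), ∑ p ∈ P, ∏ j : Fin (s-2),
            (if p.1 + (((j:ℕ)+2 : ℕ):ℤ) * (p.2 - p.1) - c j ∈ B then (1:ℕ) else 0) := by
          apply Finset.sum_congr rfl; intro c _; exact h1 c
      _ = ∑ p ∈ P, ∑ c ∈ Fintype.piFinset (fun _ : Fin (s-2) => C), ∏ j : Fin (s-2),
            (if p.1 + (((j:ℕ)+2 : ℕ):ℤ) * (p.2 - p.1) - c j ∈ B then (1:ℕ) else 0) :=
          Finset.sum_comm
      _ = ∑ p ∈ P, ∏ j : Fin (s-2), ∑ x ∈ C,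
            (if p.1 + (((j:ℕ)+2 : ℕ):ℤ) * (p.2 - p.1) - x ∈ B then (1:ℕ) else 0) := by
          apply Finset.sum_congr rfl
          intro p _
          exact (Finset.prod_univ_sum (fun _ : Fin (s-2) => C)
            (fun j x => if p.1 + (((j:ℕ)+2 : ℕ):ℤ) * (p.2 - p.1) - x ∈ B then (1:ℕ) else 0)).symm
      _ = ∑ p ∈ P, ∏ _j : Fin (s-2), m := by
          apply Finset.sum_congr rfl
          intro p hp
          apply Finset.prod_congr rfl
          intro j _
          rw [← Finset.card_filter]
          exact hfiber p hp ((j:ℕ)+2) (by have := j.2; omega)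
      _ = P.card * m^(s-2) := by
          rw [Finset.prod_const, Finset.sum_const, Finset.card_univ, Fintype.card_fin,
            smul_eq_mul]
  have hKcard : (Fintype.piFinset (fun _ : Fin (s-2) => C)).card = C.card^(s-2) := by
    rw [Fintype.card_piFinset, Finset.prod_const, Finset.card_univ, Fintype.card_fin]
  have hne : (Fintype.piFinset (fun _ : Fin (s-2) => C)).Nonempty := by
    apply Fintype.piFinset_nonempty.2
    intro j
    rw [hC]
    exact ⟨0, by rw [Finset.mem_Icc]; omega⟩
  have hexists : ∃ c ∈ Fintype.piFinset (fun _ : Fin (s-2) => C),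
      P.card * m^(s-2) ≤ C.card^(s-2) * (good c).card := by
    apply Finset.exists_le_of_sum_le hne
    apply le_of_eq
    calc ∑ _c ∈ Fintype.piFinset (fun _ : Fin (s-2) => C), P.card * m^(s-2)
        = C.card^(s-2) * (P.card * m^(s-2)) := by
          rw [Finset.sum_const, smul_eq_mul, hKcard]
      _ = C.card^(s-2) * ∑ c ∈ Fintype.piFinset (fun _ : Fin (s-2) => C), (good c).card := by
          rw [hsum]
      _ = ∑ c ∈ Fintype.piFinset (fun _ : Fin (s-2) => C), C.card^(s-2) * (good c).card := by
          rw [Finset.mul_sum]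
  obtain ⟨c, hcmem, hcge⟩ := hexists
  have hcC : ∀ j : Fin (s-2), c j ∈ C := Fintype.mem_piFinset.1 hcmem
  -- extend c to ℕ
  refine ⟨fun j => if h : 2 ≤ j ∧ j ≤ s - 1 then c ⟨j-2, by omega⟩ else 0, good c,
    ?_, ?_, ?_, ?_, ?_, ?_⟩
  · intro j
    simp only []
    by_cases h : 2 ≤ j ∧ j ≤ s - 1
    · rw [dif_pos h]
      exact hcC _
    · rw [dif_neg h, hC, Finset.mem_Icc]
      omega
  · simp only []
    rw [dif_neg (by omega)]
  · simp only []
    rw [dif_neg (by omega)]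
  · intro p hp
    rw [hgood] at hp
    have h1 := Finset.mem_of_mem_filter p hp
    rw [hP] at h1
    exact Finset.mem_of_mem_filter p h1
  · intro p hp j hj2 hjs
    simp only []
    rw [dif_pos (⟨hj2, hjs⟩ : 2 ≤ j ∧ j ≤ s - 1)]
    rw [hgood, Finset.mem_filter] at hp
    have := hp.2 ⟨j-2, by omega⟩
    have hjj : ((j - 2 : ℕ) + 2 : ℕ) = j := by omega
    rwa [hjj] at this
  · calc m^s = m^2 * m^(s-2) := by rw [← pow_add]; congr 1; omega
      _ ≤ (s * P.card) * m^(s-2) := Nat.mul_le_mul_right _ hPcard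
      _ = s * (P.card * m^(s-2)) := by ring
      _ ≤ s * (C.card^(s-2) * (good c).card) := Nat.mul_le_mul_left _ hcge
      _ ≤ s * ((4*N)^(s-2) * (good c).card) := by
          apply Nat.mul_le_mul_left
          apply Nat.mul_le_mul_right
          apply Nat.pow_le_pow_left
          omega
      _ = s * (4*N)^(s-2) * (good c).card := by ring

set_option maxHeartbeats 1000000 in
lemma construct (k s n N : ℕ) (hs : 3 ≤ s) (hk : s < k) (hN : 1 ≤ N) (hn : s ≤ n)
    (B : Finset ℤ) (hB : B ⊆ Finset.Icc 1 (N:ℤ)) (hBfree : APFree k ↑B)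
    (hBcard : B.card = n / s)
    (c : ℕ → ℤ) (hc : ∀ j, c j ∈ Finset.Icc (2 - 2*(N:ℤ)) (2*(N:ℤ) - 2))
    (hc0 : c 0 = 0) (hc1 : c 1 = 0)
    (GP : Finset (ℤ × ℤ)) (hGP : GP ⊆ B ×ˢ B)
    (hgood : ∀ p ∈ GP, ∀ j : ℕ, 2 ≤ j → j ≤ s - 1 → p.1 + (j:ℤ) * (p.2 - p.1) - c j ∈ B) :
    ∃ A : Finset ℤ, A.card = n ∧ APFree k ↑A ∧ GP.card ≤ fAP s A := by
  classical
  set m := n / s with hm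
  set M : ℤ := 10 * (s:ℤ) * (N:ℤ) with hM
  have hMN : 30 * (N:ℤ) ≤ M := by
    rw [hM]
    have : (3:ℤ) ≤ (s:ℤ) := by exact_mod_cast hs
    nlinarith [show (1:ℤ) ≤ (N:ℤ) from by exact_mod_cast hN]
  have hN1 : (1:ℤ) ≤ (N:ℤ) := by exact_mod_cast hN
  have hcrange : ∀ j, 2 - 2*(N:ℤ) ≤ c j ∧ c j ≤ 2*(N:ℤ) - 2 := by
    intro j; have := hc j; rw [Finset.mem_Icc] at this; exact this
  have hBmem : ∀ b ∈ B, 1 ≤ b ∧ b ≤ (N:ℤ) := by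
    intro b hb; have := hB hb; rw [Finset.mem_Icc] at this; exact this
  set block : ℕ → Finset ℤ := fun j => B.image (fun b => b + ((j:ℤ) * M + c j)) with hblock
  have hwin : ∀ j : ℕ, ∀ y ∈ block j, (j:ℤ)*M - 2*N ≤ y ∧ y ≤ (j:ℤ)*M + 3*N := by
    intro j y hy
    rw [hblock] at hy
    simp only [Finset.mem_image] at hy
    obtain ⟨b, hb, rfl⟩ := hy
    obtain ⟨h1, h2⟩ := hBmem b hb
    obtain ⟨h3, h4⟩ := hcrange j
    constructor <;> omega
  have hfar : ∀ (j j' : ℕ), j ≠ j' → ∀ y ∈ block j, ∀ y' ∈ block j', 5*(N:ℤ) < |y - y'| := by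
    intro j j' hne y hy y' hy'
    obtain ⟨h1, h2⟩ := hwin j y hy
    obtain ⟨h3, h4⟩ := hwin j' y' hy'
    rcases Nat.lt_or_ge j j' with h | h
    · have hj1 : (j:ℤ) + 1 ≤ (j':ℤ) := by exact_mod_cast h
      rw [abs_sub_comm, abs_of_pos (by nlinarith)]
      nlinarith
    · have hlt : j' < j := by omega
      have hj1 : (j':ℤ) + 1 ≤ (j:ℤ) := by exact_mod_cast hlt
      rw [abs_of_pos (by nlinarith)]
      nlinarith
  set Apart : Finset ℤ := (Finset.range s).biUnion block with hApart
  set W : ℤ := (s:ℤ) * M + 2*N with hW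
  have hW1 : (1:ℤ) ≤ W := by
    rw [hW, hM]
    nlinarith [show (3:ℤ) ≤ (s:ℤ) from by exact_mod_cast hs]
  have hApart_bd : ∀ y ∈ Apart, -W ≤ y ∧ y ≤ W := by
    intro y hy
    rw [hApart, Finset.mem_biUnion] at hy
    obtain ⟨j, hj, hy⟩ := hy
    rw [Finset.mem_range] at hj
    obtain ⟨h1, h2⟩ := hwin j y hy
    have hjs : (j:ℤ) < (s:ℤ) := by exact_mod_cast hj
    have hj0 : (0:ℤ) ≤ (j:ℤ) := Int.ofNat_nonneg j
    constructor
    · rw [hW]; nlinarith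
    · rw [hW]; nlinarith
  set r := n - s * m with hr
  set pad : Finset ℤ := (Finset.range r).image (fun i => (2*W + 1) * 2^(k + i)) with hpad
  have hpad_big : ∀ y ∈ pad, (2*W + 1) * 2^k ≤ y := by
    intro y hy
    rw [hpad, Finset.mem_image] at hy
    obtain ⟨i, _, rfl⟩ := hy
    have h2 : (2:ℤ)^k ≤ 2^(k+i) := pow_le_pow_right₀ (by norm_num) (by omega)
    nlinarith
  have hpadW : ∀ y ∈ pad, W < y := by
    intro y hy
    have := hpad_big y hy
    have h2 : (1:ℤ) ≤ 2^k := one_le_pow₀ (by norm_num)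
    nlinarith
  set A : Finset ℤ := Apart ∪ pad with hA
  -- cards
  have hblock_card : ∀ j, (block j).card = B.card := by
    intro j
    rw [hblock]
    exact Finset.card_image_of_injective _ (add_left_injective _)
  have hApart_card : Apart.card = s * m := by
    rw [hApart, Finset.card_biUnion]
    · rw [Finset.sum_congr rfl (fun j _ => hblock_card j), Finset.sum_const,
        Finset.card_range, smul_eq_mul, hBcard]
    · intro j hj j' hj' hne
      rw [Function.onFun, Finset.disjoint_left]
      intro y hy hy'
      have := hfar j j' hne y hy y hy'
      simp at this
      omega
  have hpad_card : pad.card = r := by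
    rw [hpad, Finset.card_image_of_injOn, Finset.card_range]
    intro i _ i' _ hii
    simp only [] at hii
    have h2 : (0:ℤ) < 2*W + 1 := by nlinarith
    have h3 := mul_left_cancel₀ (ne_of_gt h2) hii
    have h4 : (2:ℕ)^(k+i) = 2^(k+i') := by exact_mod_cast h3
    have h5 := Nat.pow_right_injective (le_refl 2) h4
    omega
  have hsm : s * m ≤ n := Nat.mul_div_le n s
  have hrs : r < s := by
    rw [hr, hm]
    have h1 := Nat.div_add_mod n s
    have h2 := Nat.mod_lt n (show 0 < s by omega)
    omega
  have hAcard : A.card = n := by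
    rw [hA, Finset.card_union_of_disjoint]
    · rw [hApart_card, hpad_card, hr]
      omega
    · rw [Finset.disjoint_left]
      intro y hy hy'
      have h1 := (hApart_bd y hy).2
      have h2 := hpadW y hy'
      omega
  have hk0 : 0 < k := by omega
  -- key: any k-AP with positive difference is not contained in A
  have hkey : ∀ x d : ℤ, 0 < d → ¬ (↑(AP k x d) : Set ℤ) ⊆ ↑A := by
    intro x d hd hsub
    have hpA : ∀ i : ℕ, i < k → x + (i:ℤ)*d ∈ A := by
      intro i hi
      exact hsub (by simp only [Finset.mem_coe, mem_AP]; exact ⟨i, hi, rfl⟩)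
    -- step 1: no element is in pad
    have hsplit : ∀ y ∈ A, y ∈ Apart ∨ y ∈ pad := by
      intro y hy; rw [hA, Finset.mem_union] at hy; exact hy
    have hp0 : x ∈ Apart := by
      by_contra hcon
      have hx : x ∈ A := by have := hpA 0 hk0; simpa using this
      have hxpad : x ∈ pad := (hsplit x hx).resolve_left hcon
      have hxW : W < x := hpadW x hxpad
      -- then all terms are in pad, so pad has ≥ k elements
      have himg : (Finset.range k).image (fun i : ℕ => x + (i:ℤ)*d) ⊆ pad := by
        intro y hy
        rw [Finset.mem_image] at hy
        obtain ⟨i, hi, rfl⟩ := hy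
        rw [Finset.mem_range] at hi
        have hyA := hpA i hi
        have hyW : W < x + (i:ℤ)*d := by nlinarith [Int.ofNat_nonneg i]
        rcases hsplit _ hyA with h | h
        · exact absurd (hApart_bd _ h).2 (by omega)
        · exact h
      have hcard : ((Finset.range k).image (fun i : ℕ => x + (i:ℤ)*d)).card = k := by
        rw [Finset.card_image_of_injOn, Finset.card_range]
        intro i hi i' hi' hii
        simp only [] at hii
        have : (i:ℤ) = (i':ℤ) := by
          have h1 : (i:ℤ)*d = (i':ℤ)*d := by omega
          exact mul_right_cancel₀ (ne_of_gt hd) h1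
        exact_mod_cast this
      have := Finset.card_le_card himg
      rw [hcard, hpad_card] at this
      omega
    have hp1 : x + d ∈ Apart := by
      by_contra hcon
      have hx : x + d ∈ A := by have := hpA 1 (by omega); simpa using this
      have hxpad : x + d ∈ pad := (hsplit _ hx).resolve_left hcon
      have hxW : W < x + d := hpadW _ hxpad
      have himg : (Finset.Icc 1 (k-1)).image (fun i : ℕ => x + (i:ℤ)*d) ⊆ pad := by
        intro y hy
        rw [Finset.mem_image] at hy
        obtain ⟨i, hi, rfl⟩ := hy
        rw [Finset.mem_Icc] at hi
        have hyA := hpA i (by omega)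
        have h1i : (1:ℤ) ≤ (i:ℤ) := by exact_mod_cast hi.1
        have hyW : W < x + (i:ℤ)*d := by nlinarith
        rcases hsplit _ hyA with h | h
        · exact absurd (hApart_bd _ h).2 (by omega)
        · exact h
      have hcard : ((Finset.Icc 1 (k-1)).image (fun i : ℕ => x + (i:ℤ)*d)).card = k - 1 := by
        rw [Finset.card_image_of_injOn, Nat.card_Icc]
        · omega
        · intro i hi i' hi' hii
          simp only [] at hii
          have : (i:ℤ) = (i':ℤ) := by
            have h1 : (i:ℤ)*d = (i':ℤ)*d := by omega
            exact mul_right_cancel₀ (ne_of_gt hd) h1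
          exact_mod_cast this
      have := Finset.card_le_card himg
      rw [hcard, hpad_card] at this
      omega
    have hd2W : d ≤ 2*W := by
      have h1 := (hApart_bd _ hp0).1
      have h2 := (hApart_bd _ hp1).2
      omega
    have hnopad : ∀ i : ℕ, i < k → x + (i:ℤ)*d ∈ Apart := by
      intro i hi
      rcases hsplit _ (hpA i hi) with h | h
      · exact h
      · exfalso
        have h1 := hpad_big _ h
        have h2 : 2*(k:ℤ) + 1 < 2^k := by exact_mod_cast pow2k k (by omega)
        have h3 := (hApart_bd _ hp0).2
        have hik : (i:ℤ) ≤ (k:ℤ) - 1 := by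
          have : i ≤ k - 1 := by omega
          have h4 : ((k:ℤ) - 1) = ((k-1 : ℕ) : ℤ) := by
            push_cast [Nat.cast_sub (by omega : 1 ≤ k)]; ring
          rw [h4]; exact_mod_cast this
        have hi0 : (0:ℤ) ≤ (i:ℤ) := Int.ofNat_nonneg i
        nlinarith
    -- step 2: all in one block
    have hL : ∀ i : Fin k, ∃ j : Fin s, x + ((i:ℕ):ℤ)*d ∈ block j := by
      intro i
      have := hnopad i i.2
      rw [hApart, Finset.mem_biUnion] at this
      obtain ⟨j, hj, hmem⟩ := this
      rw [Finset.mem_range] at hj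
      exact ⟨⟨j, hj⟩, hmem⟩
    choose L hLmem using hL
    obtain ⟨i1, i2, hne12, hL12⟩ := Fintype.exists_ne_map_eq_of_card_lt L
      (by simpa using hk)
    have hd5 : d ≤ 5*(N:ℤ) := by
      have h1 := hwin _ _ (hLmem i1)
      have h2 := hwin _ _ ((hL12 ▸ hLmem i2))
      -- both in window of L i1
      have hdiff : |((i1:ℕ):ℤ) - ((i2:ℕ):ℤ)| * d ≤ 5*(N:ℤ) := by
        rcases abs_cases (((i1:ℕ):ℤ) - ((i2:ℕ):ℤ)) with ⟨he, _⟩ | ⟨he, _⟩ <;> rw [he] <;> nlinarith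
      have hge1 : 1 ≤ |((i1:ℕ):ℤ) - ((i2:ℕ):ℤ)| := by
        have hne : ((i1:ℕ):ℤ) ≠ ((i2:ℕ):ℤ) := by
          intro hcon
          apply hne12
          have : (i1:ℕ) = (i2:ℕ) := by exact_mod_cast hcon
          exact Fin.ext this
        rcases abs_cases (((i1:ℕ):ℤ) - ((i2:ℕ):ℤ)) with ⟨he, h2⟩ | ⟨he, h2⟩ <;> omega
      nlinarith [abs_nonneg (((i1:ℕ):ℤ) - ((i2:ℕ):ℤ))]
    -- consecutive terms are in the same block
    have hLconst : ∀ i : Fin k, L i = L ⟨0, hk0⟩ := by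
      intro i
      obtain ⟨iv, hiv⟩ := i
      induction iv with
      | zero => rfl
      | succ t ih =>
        have ht : t < k := by omega
        have heq : L ⟨t+1, hiv⟩ = L ⟨t, ht⟩ := by
          by_contra hcon
          have hfar' := hfar (L ⟨t+1, hiv⟩) (L ⟨t, ht⟩)
            (by intro hcc; exact hcon (Fin.ext hcc)) _ (hLmem ⟨t+1, hiv⟩) _ (hLmem ⟨t, ht⟩)
          have : x + ((t+1:ℕ):ℤ)*d - (x + ((t:ℕ):ℤ)*d) = d := by push_cast; ring
          rw [this] at hfar'
          rw [abs_of_pos hd] at hfar'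
          omega
        rw [heq]
        exact ih ht
    -- so the AP is inside one block, contradiction with APFree of translate
    set j0 := L ⟨0, hk0⟩ with hj0
    have hBt := APFree_translate hBfree (((j0:ℕ):ℤ) * M + c (j0:ℕ))
    apply hBt x d (ne_of_gt hd)
    intro y hy
    rw [Finset.mem_coe, mem_AP] at hy
    obtain ⟨i, hi, rfl⟩ := hy
    have := hLmem ⟨i, hi⟩
    rw [hLconst ⟨i, hi⟩] at this
    rw [hblock] at this
    simpa using this
  refine ⟨A, hAcard, ?_, ?_⟩
  · intro x d hd hsub
    rcases lt_trichotomy d 0 with hneg | hzero | hpos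
    · have := AP_neg k x d hk0
      apply hkey (x + ((k:ℤ)-1)*d) (-d) (by omega)
      rw [this]
      exact hsub
    · exact hd hzero
    · exact hkey x d hpos hsub
  · -- count the APs coming from good pairs
    set F : ℤ × ℤ → Finset ℤ := fun p => AP s p.1 (M + (p.2 - p.1)) with hF
    have hdpos : ∀ p ∈ GP, 0 < M + (p.2 - p.1) := by
      intro p hp
      have hp' := hGP hp
      rw [Finset.mem_product] at hp'
      obtain ⟨h1, h2⟩ := hBmem _ hp'.1
      obtain ⟨h3, h4⟩ := hBmem _ hp'.2
      omega
    have hFsub : ∀ p ∈ GP, F p ⊆ A := by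
      intro p hp y hy
      rw [hF] at hy
      simp only [] at hy
      rw [mem_AP] at hy
      obtain ⟨i, his, rfl⟩ := hy
      have hiB : p.1 + (i:ℤ)*(p.2 - p.1) - c i ∈ B := by
        rcases Nat.lt_or_ge i 2 with hi2 | hi2
        · interval_cases i
          · rw [hc0]
            simpa using (Finset.mem_product.1 (hGP hp)).1
          · rw [hc1]
            have := (Finset.mem_product.1 (hGP hp)).2
            have he : p.1 + ((1:ℕ):ℤ)*(p.2 - p.1) - 0 = p.2 := by push_cast; ring
            rwa [he]
        · exact hgood p hp i hi2 (by omega)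
      rw [hA, Finset.mem_union]
      left
      rw [hApart, Finset.mem_biUnion]
      refine ⟨i, Finset.mem_range.2 his, ?_⟩
      rw [hblock]
      rw [Finset.mem_image]
      refine ⟨p.1 + (i:ℤ)*(p.2 - p.1) - c i, hiB, by ring⟩
    have hFinj : Set.InjOn F ↑GP := by
      intro p hp q hq hpq
      rw [hF] at hpq
      simp only [] at hpq
      obtain ⟨h1, h2⟩ := AP_inj (by omega) (hdpos p (by simpa using hp))
        (hdpos q (by simpa using hq)) hpq
      have hp2 : p.2 = q.2 := by omega
      exact Prod.ext h1 hp2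
    calc GP.card = (GP.image F).card := (Finset.card_image_of_injOn hFinj).symm
      _ ≤ fAP s A := by
          rw [fAP_eq_ncard]
          have hsub2 : (↑(GP.image F) : Set (Finset ℤ)) ⊆
              {P : Finset ℤ | P ⊆ A ∧ ∃ x d : ℤ, d ≠ 0 ∧ P = AP s x d} := by
            intro Q hQ
            rw [Finset.coe_image] at hQ
            obtain ⟨p, hp, rfl⟩ := hQ
            refine ⟨hFsub p (by simpa using hp), p.1, M + (p.2 - p.1),
              ne_of_gt (hdpos p (by simpa using hp)), rfl⟩
          calc (GP.image F).card = (↑(GP.image F) : Set (Finset ℤ)).ncard :=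
                (Set.ncard_coe_finset _).symm
            _ ≤ _ := Set.ncard_le_ncard hsub2 (fAP_set_finite s A)

lemma key_nat (s n m : ℕ) (hs : 3 ≤ s) (hn75 : 75 * s ≤ n) (hm : m = n / s)
    (h74 : 5625 * s^3 ≤ 74^s) : n^s * s ≤ m^s * (75*s)^(s-2) := by
  have hs0 : 0 < s := by omega
  have hdm : s * m + n % s = n := by rw [hm]; exact Nat.div_add_mod n s
  have hms : n % s < s := Nat.mod_lt n hs0
  have h1 : 74 * n ≤ 75 * (s * m) := by omega
  have h2 : (74*n)^s ≤ (75*(s*m))^s := Nat.pow_le_pow_left h1 s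
  have h3 : n^s * s * (75*s)^2 ≤ m^s * (75*s)^(s-2) * (75*s)^2 := by
    calc n^s * s * (75*s)^2 = s^3 * 5625 * n^s := by ring
      _ ≤ 74^s * n^s := by
          apply Nat.mul_le_mul_right
          calc s^3 * 5625 = 5625 * s^3 := by ring
            _ ≤ 74^s := h74
      _ = (74*n)^s := by rw [mul_pow]
      _ ≤ (75*(s*m))^s := h2
      _ = (75*s)^s * m^s := by rw [show 75*(s*m) = (75*s)*m by ring, mul_pow]
      _ = m^s * (75*s)^(s-2) * (75*s)^2 := by
          rw [mul_assoc, ← pow_add, show s - 2 + 2 = s by omega, mul_comm]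
  exact Nat.le_of_mul_le_mul_right h3 (by positivity)

theorem fsk_lower_via_least_N (k s : ℕ) (hs : 3 ≤ s) (hk : s < k) :
    ∃ n₀ : ℕ, ∀ n : ℕ, n₀ ≤ n → ∀ N : ℕ,
      IsLeast {N : ℕ | 0 < N ∧ rk k N = n / s} N →
      ((n : ℝ) / (300 * s * N)) ^ (s - 2) * (n : ℝ) ^ 2 ≤ (fsk s k n : ℝ) := by
  refine ⟨75 * s, ?_⟩
  intro n hn N hNl
  obtain ⟨⟨hNpos, hrk⟩, -⟩ := hNl
  have hk0 : 0 < k := by omega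
  have hs0 : 0 < s := by omega
  have hns : s ≤ n := by nlinarith
  obtain ⟨B, hB, hBfree, hBcard⟩ := rk_attained hk0 N
  rw [hrk] at hBcard
  obtain ⟨c, GP, hc, hc0, hc1, hGP, hgood, hcount⟩ := exist_good s N hs hNpos B hB
  obtain ⟨A, hAcard, hAfree, hAcount⟩ := construct k s n N hs hk hNpos hns B hB hBfree hBcard
    c hc hc0 hc1 GP hGP hgood
  have hfsk : GP.card ≤ fsk s k n := le_trans hAcount (le_fsk A hAcard hAfree)
  have h74 := num74 s hs
  have hkey := key_nat s n (n/s) hs hn rfl h74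
  rw [hBcard] at hcount
  have hnat : s * (n^s) ≤ s * ((300*s*N)^(s-2) * fsk s k n) := by
    calc s * (n^s) = n^s * s := by ring
      _ ≤ (n/s)^s * (75*s)^(s-2) := hkey
      _ ≤ (s * (4*N)^(s-2) * GP.card) * (75*s)^(s-2) := Nat.mul_le_mul_right _ hcount
      _ ≤ (s * (4*N)^(s-2) * fsk s k n) * (75*s)^(s-2) := by
            apply Nat.mul_le_mul_right
            exact Nat.mul_le_mul_left _ hfsk
      _ = s * ((300*s*N)^(s-2) * fsk s k n) := by
            rw [show (300*s*N)^(s-2) = (4*N)^(s-2) * (75*s)^(s-2) by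
              rw [← mul_pow]; congr 1; ring]
            ring
  have hnat2 : n^s ≤ (300*s*N)^(s-2) * fsk s k n := Nat.le_of_mul_le_mul_left hnat hs0
  rw [div_pow, div_mul_eq_mul_div, div_le_iff₀ (by positivity)]
  have hcast : ((n:ℝ))^(s-2) * (n:ℝ)^2 = (n:ℝ)^s := by
    rw [← pow_add]
    congr 1
    omega
  rw [hcast]
  calc ((n:ℝ))^s = ((n^s : ℕ) : ℝ) := by push_cast; ring
    _ ≤ (((300*s*N)^(s-2) * fsk s k n : ℕ) : ℝ) := by exact_mod_cast hnat2
    _ = (fsk s k n : ℝ) * ((300*(s:ℝ)*(N:ℝ))^(s-2)) := by push_cast; ring
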